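/- For every real number N > 1 the following holds: if 0 < r ≤ D ≤ π, π − D ≤ r, and ∫_0^r sin^{N−1}(t) dt ≤ ∫_{D−r}^{π−r} sin^{N−1}(t) dt, then N · ∫_0^r sin^{N−1}(t) dt ≤ (2^N − 1) · (π − D) · r^{N−1}. -/

import Mathlib

open Real

/-- Chord estimate from concavity of `sin` on `[0, π]`. -/
lemma sin_chord_aux {r s : ℝ} (hr : 0 < r) (hrs : r ≤ s) (hsπ : s ≤ π) :
    Real.sin s * r ≤ Real.sin r * s := by
  have hs : 0 < s := lt_of_lt_of_le hr hrs
  have h := (strictConcaveOn_sin_Icc.concaveOn).2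
    (show (0:ℝ) ∈ Set.Icc 0 π from ⟨le_refl 0, Real.pi_nonneg⟩)
    (show s ∈ Set.Icc 0 π from ⟨hs.le, hsπ⟩)
    (show (0:ℝ) ≤ 1 - r / s by rw [sub_nonneg]; exact div_le_one_of_le₀ hrs hs.le)
    (show (0:ℝ) ≤ r / s by positivity)
    (show 1 - r / s + r / s = 1 by ring)
  simp only [smul_eq_mul, mul_zero, zero_add, Real.sin_zero] at h
  rw [div_mul_cancel₀ _ hs.ne'] at h
  rw [div_mul_eq_mul_div, div_le_iff₀ hs] at h
  linarith

/-- Step 2 in the proof of Proposition 5.1 (Proposition `P:antipodal`): if `0 < r ≤ D ≤ π`,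
`π - D ≤ r` and `∫_0^r sin^{N-1} ≤ ∫_{D-r}^{π-r} sin^{N-1}`, then
`N ∫_0^r sin^{N-1}(t) dt ≤ (2^N - 1)(π - D) r^{N-1}`. -/
theorem antipodal_step_two (N : ℝ) (hN1 : 1 < N) (r D : ℝ)
    (hr : 0 < r) (hrD : r ≤ D) (hDπ : D ≤ π) (hεr : π - D ≤ r)
    (hint : (∫ t in (0:ℝ)..r, Real.sin t ^ (N - 1))
        ≤ (∫ t in (D - r)..(π - r), Real.sin t ^ (N - 1))) :
    N * (∫ t in (0:ℝ)..r, Real.sin t ^ (N - 1))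
      ≤ ((2:ℝ) ^ N - 1) * (π - D) * r ^ (N - 1) := by
  have hN0 : (0:ℝ) < N := lt_trans one_pos hN1
  have hN1' : (0:ℝ) ≤ N - 1 := by linarith
  have hrπ : r ≤ π := le_trans hrD hDπ
  set ε : ℝ := π - D with hεdef
  have hε0 : (0:ℝ) ≤ ε := by rw [hεdef]; linarith
  have hεle : ε ≤ r := hεr
  have hsinr0 : 0 ≤ Real.sin r := Real.sin_nonneg_of_nonneg_of_le_pi hr.le hrπ
  set c : ℝ := Real.sin r / r with hcdef
  have hc0 : 0 ≤ c := div_nonneg hsinr0 hr.le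
  have hc1 : c ≤ 1 := div_le_one_of_le₀ (Real.sin_le hr.le) hr.le
  have hab : D - r ≤ π - r := by linarith
  -- pointwise bound on the interval [D - r, π - r]
  have hpt : ∀ t ∈ Set.Icc (D - r) (π - r),
      Real.sin t ^ (N - 1) ≤ ((π - t) * c) ^ (N - 1) := by
    intro t ht
    obtain ⟨ht1, ht2⟩ := ht
    have ht0 : 0 ≤ t := by linarith
    have htπ : t ≤ π := by linarith
    have hs1 : r ≤ π - t := by linarith
    have hs2 : π - t ≤ π := by linarith
    have hsin : Real.sin t ≤ (π - t) * c := by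
      have hch := sin_chord_aux hr hs1 hs2
      rw [← Real.sin_pi_sub t, hcdef, ← mul_div_assoc, le_div_iff₀ hr]
      linarith
    exact Real.rpow_le_rpow (Real.sin_nonneg_of_nonneg_of_le_pi ht0 htπ) hsin hN1'
  have hcont1 : Continuous fun t : ℝ => Real.sin t ^ (N - 1) :=
    Real.continuous_sin.rpow_const fun x => Or.inr hN1'
  have hcont2 : Continuous fun t : ℝ => ((π - t) * c) ^ (N - 1) :=
    ((continuous_const.sub continuous_id).mul continuous_const).rpow_const
      fun x => Or.inr hN1'
  have hJ : (∫ t in (D - r)..(π - r), Real.sin t ^ (N - 1))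
      ≤ ∫ t in (D - r)..(π - r), ((π - t) * c) ^ (N - 1) :=
    intervalIntegral.integral_mono_on hab (hcont1.intervalIntegrable _ _)
      (hcont2.intervalIntegrable _ _) hpt
  -- compute the right-hand integral
  have hK : (∫ t in (D - r)..(π - r), ((π - t) * c) ^ (N - 1))
      = c ^ (N - 1) * (((r + ε) ^ N - r ^ N) / N) := by
    have h1 : (∫ t in (D - r)..(π - r), ((π - t) * c) ^ (N - 1))
        = ∫ t in (D - r)..(π - r), (π - t) ^ (N - 1) * c ^ (N - 1) := by
      apply intervalIntegral.integral_congr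
      intro t ht
      rw [Set.uIcc_of_le hab] at ht
      exact Real.mul_rpow (by linarith [ht.2] : (0:ℝ) ≤ π - t) hc0
    rw [h1, intervalIntegral.integral_mul_const]
    have h2 : (∫ t in (D - r)..(π - r), (π - t) ^ (N - 1))
        = ∫ s in r..(r + ε), s ^ (N - 1) := by
      rw [intervalIntegral.integral_comp_sub_left (fun s => s ^ (N - 1)) π,
        show π - (π - r) = r by ring, show π - (D - r) = r + ε by rw [hεdef]; ring]
    rw [h2, integral_rpow (Or.inl (by linarith : (-1:ℝ) < N - 1)),
      show N - 1 + 1 = N by ring]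
    ring
  -- convexity of x ^ N
  have hconv : (r + ε) ^ N - r ^ N ≤ (ε / r) * ((2 * r) ^ N - r ^ N) := by
    have h := (convexOn_rpow hN1.le).2
      (show r ∈ Set.Ici (0:ℝ) from Set.mem_Ici.mpr hr.le)
      (show 2 * r ∈ Set.Ici (0:ℝ) from Set.mem_Ici.mpr (by linarith))
      (show (0:ℝ) ≤ 1 - ε / r by rw [sub_nonneg]; exact div_le_one_of_le₀ hεle hr.le)
      (show (0:ℝ) ≤ ε / r by positivity)
      (show 1 - ε / r + ε / r = 1 by ring)
    simp only [smul_eq_mul] at h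
    rw [show (1 - ε / r) * r + ε / r * (2 * r) = r + ε by field_simp; ring] at h
    nlinarith [h]
  have hsub0 : (0:ℝ) ≤ (r + ε) ^ N - r ^ N := by
    have := Real.rpow_le_rpow hr.le (by linarith : r ≤ r + ε) hN0.le
    linarith
  calc N * (∫ t in (0:ℝ)..r, Real.sin t ^ (N - 1))
      ≤ N * (c ^ (N - 1) * (((r + ε) ^ N - r ^ N) / N)) := by
        exact mul_le_mul_of_nonneg_left (le_trans hint (hJ.trans_eq hK)) hN0.le
    _ = c ^ (N - 1) * ((r + ε) ^ N - r ^ N) := by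
        field_simp
    _ ≤ 1 * ((ε / r) * ((2 * r) ^ N - r ^ N)) :=
        mul_le_mul (Real.rpow_le_one hc0 hc1 hN1') hconv hsub0 one_pos.le
    _ = ((2:ℝ) ^ N - 1) * ε * r ^ (N - 1) := by
        rw [Real.mul_rpow (by norm_num : (0:ℝ) ≤ 2) hr.le,
          Real.rpow_sub hr, Real.rpow_one]
        field_simp
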